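/- With binary weights, a distribution δ is weakly decomposable if and only if for every level ℓ of the equilibrium partition, δ(∪_{k≥ℓ} X*_k) ≥ δ*(∪_{k≥ℓ} X*_k), where X*_1, …, X*_p partition the charities by their (increasing) equilibrium allocations. -/

import Mathlib

open Finset MeasureTheory

lemma ico_disj {a b c d : ℝ} (h : b ≤ c) :
    Disjoint (Set.Ico a b) (Set.Ico c d) := by
  rw [Set.disjoint_left]
  rintro t ⟨-, h1⟩ ⟨h2, -⟩
  exact absurd (h1.trans_le (h.trans h2)) (lt_irrefl t)

lemma key_le_sum {ι K : Type*} [Fintype ι] [LinearOrder K]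
    (key : ι → K) (hkey : Function.Injective key) (f : ι → ℝ) (x : ι) :
    ∑ y ∈ univ.filter (fun y => key y ≤ key x), f y =
      (∑ y ∈ univ.filter (fun y => key y < key x), f y) + f x := by
  classical
  have h : univ.filter (fun y => key y ≤ key x)
      = insert x (univ.filter (fun y => key y < key x)) := by
    ext y
    simp only [mem_filter, mem_univ, true_and, mem_insert]
    constructor
    · intro h
      rcases lt_or_eq_of_le h with h | h
      · exact Or.inr h
      · exact Or.inl (hkey h)
    · rintro (rfl | h)
      · exact le_rfl
      · exact h.le
  rw [h, sum_insert (by simp), add_comm]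

lemma tile_cover {ι K : Type*} [Fintype ι] [LinearOrder K]
    (key : ι → K) (hkey : Function.Injective key) (f : ι → ℝ) (hf : ∀ x, 0 ≤ f x)
    (t : ℝ) (ht0 : 0 ≤ t) (ht : t < ∑ x, f x) :
    ∃ x, (∑ y ∈ univ.filter (fun y => key y < key x), f y) ≤ t ∧
      t < (∑ y ∈ univ.filter (fun y => key y < key x), f y) + f x := by
  classical
  set s : ι → ℝ := fun x => ∑ y ∈ univ.filter (fun y => key y < key x), f y with hs
  have hne : (univ : Finset ι).Nonempty := by
    by_contra h
    rw [not_nonempty_iff_eq_empty] at h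
    rw [h, sum_empty] at ht
    exact absurd (ht0.trans_lt ht) (lt_irrefl _)
  obtain ⟨x0, -, hx0⟩ := Finset.exists_min_image univ key hne
  have hGne : (univ.filter (fun x => s x ≤ t)).Nonempty := by
    refine ⟨x0, mem_filter.2 ⟨mem_univ _, ?_⟩⟩
    have : univ.filter (fun y => key y < key x0) = ∅ := by
      rw [filter_eq_empty_iff]
      intro y _
      exact not_lt.2 (hx0 y (mem_univ y))
    simp [hs, this, ht0]
  obtain ⟨xs, hxsG, hxs⟩ := Finset.exists_max_image _ key hGne
  rw [mem_filter] at hxsG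
  refine ⟨xs, hxsG.2, ?_⟩
  by_contra h
  push_neg at h
  -- h : s xs + f xs ≤ t
  have hle : ∑ y ∈ univ.filter (fun y => key y ≤ key xs), f y ≤ t := by
    rw [key_le_sum key hkey]; exact h
  have hex : ∃ y, key xs < key y := by
    by_contra hc
    push_neg at hc
    have : univ.filter (fun y => key y ≤ key xs) = univ := by
      rw [filter_eq_self]; intro y _; exact hc y
    rw [this] at hle
    exact absurd (ht.trans_le hle) (lt_irrefl _)
  have hBne : (univ.filter (fun y => key xs < key y)).Nonempty := by
    obtain ⟨y, hy⟩ := hex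
    exact ⟨y, mem_filter.2 ⟨mem_univ _, hy⟩⟩
  obtain ⟨y0, hy0B, hy0⟩ := Finset.exists_min_image _ key hBne
  rw [mem_filter] at hy0B
  have hfilt : univ.filter (fun z => key z < key y0) = univ.filter (fun z => key z ≤ key xs) := by
    ext z
    simp only [mem_filter, mem_univ, true_and]
    constructor
    · intro hz
      by_contra hc
      push_neg at hc
      exact absurd (hy0 z (mem_filter.2 ⟨mem_univ _, hc⟩)) (not_le.2 hz)
    · intro hz
      exact hz.trans_lt hy0B.2
  have hsy0 : s y0 = ∑ y ∈ univ.filter (fun y => key y ≤ key xs), f y := by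
    simp only [hs]; rw [hfilt]
  have : y0 ∈ univ.filter (fun x => s x ≤ t) :=
    mem_filter.2 ⟨mem_univ _, by rw [hsy0]; exact hle⟩
  exact absurd hy0B.2 (not_lt.2 (hxs y0 this))

theorem stmt_17 {N A : Type*} [Fintype N] [Fintype A] [DecidableEq A]
    (C : N → ℝ) (hC : ∀ i, 0 ≤ C i)
    (Ai : N → Finset A) (hAi : ∀ i, (Ai i).Nonempty)
    (δstar : A → ℝ) (hδs : ∀ x, 0 ≤ δstar x) (hsum : ∑ x, δstar x = ∑ i, C i)
    -- δstar is the equilibrium distribution: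
    (heq : ∃ δi : N → A → ℝ, (∀ i x, 0 ≤ δi i x) ∧ (∀ x, ∑ i, δi i x = δstar x) ∧
        (∀ i, ∑ x, δi i x = C i) ∧
        (∀ i x, x ∉ Ai i → δi i x = 0) ∧
        (∀ i x, δstar x ≠ (Ai i).inf' (hAi i) δstar → δi i x = 0))
    -- the partition X*_1, …, X*_p of the charities by equilibrium amounts w*_1 < … < w*_p:
    (p : ℕ) (X : Fin p → Finset A) (w : Fin p → ℝ)
    (hpart : ∀ x : A, ∃! k : Fin p, x ∈ X k)
    (hXne : ∀ k, (X k).Nonempty)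
    (hlevel : ∀ k, ∀ x ∈ X k, δstar x = w k)
    (hmono : StrictMono w)
    (δ : A → ℝ) (hδ : ∀ x, 0 ≤ δ x) (hsum2 : ∑ x, δ x = ∑ i, C i) :
    -- δ is weakly decomposable iff every tail of the partition gets at least as much as in δstar:
    (∃ δi : N → A → ℝ, (∀ i x, 0 ≤ δi i x) ∧ (∀ x, ∑ i, δi i x = δ x) ∧
        (∀ i, ∑ x, δi i x = C i) ∧
        (∀ i x, δi i x ≠ 0 → (Ai i).inf' (hAi i) δstar ≤ δstar x))
    ↔ (∀ ℓ : Fin p,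
        ∑ x ∈ (Finset.univ.filter fun k => ℓ ≤ k).biUnion X, δstar x ≤
          ∑ x ∈ (Finset.univ.filter fun k => ℓ ≤ k).biUnion X, δ x) := by
  classical
  -- levels of charities
  have hlxe : ∀ x : A, ∃ k, x ∈ X k := fun x => (hpart x).exists
  choose lx hlxm using hlxe
  have hluniq : ∀ {x : A} {k : Fin p}, x ∈ X k → k = lx x :=
    fun {x k} h => ((hpart x).unique h (hlxm x))
  have hδw : ∀ x, δstar x = w (lx x) := fun x => hlevel _ x (hlxm x)
  -- levels of agents
  have hlie : ∀ i : N, ∃ k : Fin p, w k = (Ai i).inf' (hAi i) δstar := by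
    intro i
    obtain ⟨y, hy, hyeq⟩ := Finset.exists_mem_eq_inf' (hAi i) δstar
    exact ⟨lx y, by rw [← hδw y, hyeq]⟩
  choose li hliw using hlie
  -- tails as filters
  have hbiU : ∀ ℓ : Fin p, (Finset.univ.filter fun k => ℓ ≤ k).biUnion X
      = univ.filter (fun x => ℓ ≤ lx x) := by
    intro ℓ
    ext x
    simp only [mem_biUnion, mem_filter, mem_univ, true_and]
    constructor
    · rintro ⟨k, hk, hxk⟩
      rwa [hluniq hxk] at hk
    · intro h
      exact ⟨lx x, h, hlxm x⟩
  -- the key equilibrium identity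
  have hkey : ∀ k : Fin p,
      ∑ i ∈ univ.filter (fun i => k ≤ li i), C i
        = ∑ x ∈ univ.filter (fun x => k ≤ lx x), δstar x := by
    obtain ⟨ε, hε0, hεcol, hεrow, -, hεsupp⟩ := heq
    intro k
    have h1 : ∑ x ∈ univ.filter (fun x => k ≤ lx x), δstar x
        = ∑ i, ∑ x ∈ univ.filter (fun x => k ≤ lx x), ε i x := by
      rw [Finset.sum_comm]
      exact Finset.sum_congr rfl fun x _ => (hεcol x).symm
    have h2 : ∀ i ∈ univ.filter (fun i => ¬ k ≤ li i),
        ∑ x ∈ univ.filter (fun x => k ≤ lx x), ε i x = 0 := by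
      intro i hi
      rw [mem_filter] at hi
      apply Finset.sum_eq_zero
      intro x hx
      rw [mem_filter] at hx
      apply hεsupp
      rw [hδw x, ← hliw i]
      exact (ne_of_gt (hmono ((not_le.1 hi.2).trans_le hx.2)))
    have h3 : ∀ i ∈ univ.filter (fun i => k ≤ li i),
        ∑ x ∈ univ.filter (fun x => k ≤ lx x), ε i x = C i := by
      intro i hi
      rw [mem_filter] at hi
      rw [← hεrow i]
      apply Finset.sum_subset (filter_subset _ _)
      intro x _ hx
      rw [mem_filter] at hx
      push_neg at hx
      apply hεsupp
      rw [hδw x, ← hliw i]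
      exact ne_of_lt (hmono ((hx (mem_univ x)).trans_le hi.2))
    rw [h1, ← Finset.sum_filter_add_sum_filter_not univ (fun i => k ≤ li i),
      Finset.sum_congr rfl h2, Finset.sum_const_zero, add_zero,
      Finset.sum_congr rfl h3]
  simp only [hbiU]
  constructor
  · -- forward direction
    rintro ⟨d, hd0, hdcol, hdrow, hdsupp⟩ ℓ
    rw [← hkey ℓ]
    have step1 : ∀ i ∈ univ.filter (fun i => ℓ ≤ li i),
        C i = ∑ x ∈ univ.filter (fun x => ℓ ≤ lx x), d i x := by
      intro i hi
      rw [mem_filter] at hi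
      rw [← hdrow i]
      symm
      apply Finset.sum_subset (filter_subset _ _)
      intro x _ hx
      rw [mem_filter] at hx
      push_neg at hx
      by_contra hne
      have := hdsupp i x hne
      rw [← hliw i, hδw x, hmono.le_iff_le] at this
      exact absurd (hi.2.trans this) (not_le.2 (hx (mem_univ x)))
    calc ∑ i ∈ univ.filter (fun i => ℓ ≤ li i), C i
        = ∑ i ∈ univ.filter (fun i => ℓ ≤ li i),
            ∑ x ∈ univ.filter (fun x => ℓ ≤ lx x), d i x := Finset.sum_congr rfl step1
      _ ≤ ∑ i, ∑ x ∈ univ.filter (fun x => ℓ ≤ lx x), d i x := by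
          apply Finset.sum_le_sum_of_subset_of_nonneg (filter_subset _ _)
          intro i _ _
          exact Finset.sum_nonneg fun x _ => hd0 i x
      _ = ∑ x ∈ univ.filter (fun x => ℓ ≤ lx x), δ x := by
          rw [Finset.sum_comm]
          exact Finset.sum_congr rfl fun x _ => hdcol x
  · -- backward direction: the interval construction
    intro htail
    set T : ℝ := ∑ i, C i with hT
    -- keys
    set keyA : A → Lex (Fin p × Fin (Fintype.card A)) :=
      fun x => toLex (lx x, (Fintype.equivFin A) x) with hkeyA
    set keyN : N → Lex (Fin p × Fin (Fintype.card N)) :=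
      fun i => toLex (li i, (Fintype.equivFin N) i) with hkeyN
    have hkeyAinj : Function.Injective keyA := by
      intro x y h
      have := congrArg (fun z => (ofLex z).2) h
      exact (Fintype.equivFin A).injective this
    have hkeyNinj : Function.Injective keyN := by
      intro x y h
      have := congrArg (fun z => (ofLex z).2) h
      exact (Fintype.equivFin N).injective this
    have hkeyAle : ∀ {x y : A}, keyA y ≤ keyA x → lx y ≤ lx x := by
      intro x y h
      rcases Prod.Lex.le_iff.1 h with h | h
      · exact h.le
      · exact h.1.le
    have hkeyNlt : ∀ {i j : N}, li j < li i → keyN j < keyN i := by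
      intro i j h
      exact Prod.Lex.lt_iff.2 (Or.inl h)
    -- interval starts
    set s : A → ℝ := fun x => ∑ y ∈ univ.filter (fun y => keyA y < keyA x), δ y with hsdef
    set a : N → ℝ := fun i => ∑ j ∈ univ.filter (fun j => keyN j < keyN i), C j with hadef
    have hs0 : ∀ x, 0 ≤ s x := fun x => Finset.sum_nonneg fun y _ => hδ y
    have ha0 : ∀ i, 0 ≤ a i := fun i => Finset.sum_nonneg fun j _ => hC j
    have hsT : ∀ x, s x + δ x ≤ T := by
      intro x
      rw [← hsum2, ← key_le_sum keyA hkeyAinj δ x]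
      exact Finset.sum_le_sum_of_subset_of_nonneg (filter_subset _ _)
        (fun y _ _ => hδ y)
    have haT : ∀ i, a i + C i ≤ T := by
      intro i
      rw [hT, ← key_le_sum keyN hkeyNinj C i]
      exact Finset.sum_le_sum_of_subset_of_nonneg (filter_subset _ _)
        (fun j _ _ => hC j)
    -- intervals
    set J : A → Set ℝ := fun x => Set.Ico (s x) (s x + δ x) with hJdef
    set I : N → Set ℝ := fun i => Set.Ico (a i) (a i + C i) with hIdef
    have hJdisj : ∀ {x y : A}, x ≠ y → Disjoint (J x) (J y) := by
      have main : ∀ {x y : A}, keyA x < keyA y → Disjoint (J x) (J y) := by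
        intro x y hxy
        apply ico_disj
        calc s x + δ x = ∑ z ∈ univ.filter (fun z => keyA z ≤ keyA x), δ z :=
              (key_le_sum keyA hkeyAinj δ x).symm
          _ ≤ s y := by
              apply Finset.sum_le_sum_of_subset_of_nonneg _ (fun z _ _ => hδ z)
              intro z hz
              rw [mem_filter] at hz ⊢
              exact ⟨hz.1, hz.2.trans_lt hxy⟩
      intro x y hxy
      rcases lt_or_gt_of_ne (fun h => hxy (hkeyAinj h)) with h | h
      · exact main h
      · exact (main h).symm
    have hIdisj : ∀ {i j : N}, i ≠ j → Disjoint (I i) (I j) := by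
      have main : ∀ {i j : N}, keyN i < keyN j → Disjoint (I i) (I j) := by
        intro i j hij
        apply ico_disj
        calc a i + C i = ∑ z ∈ univ.filter (fun z => keyN z ≤ keyN i), C z :=
              (key_le_sum keyN hkeyNinj C i).symm
          _ ≤ a j := by
              apply Finset.sum_le_sum_of_subset_of_nonneg _ (fun z _ _ => hC z)
              intro z hz
              rw [mem_filter] at hz ⊢
              exact ⟨hz.1, hz.2.trans_lt hij⟩
      intro i j hij
      rcases lt_or_gt_of_ne (fun h => hij (hkeyNinj h)) with h | h
      · exact main h
      · exact (main h).symm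
    have hJcover : ∀ t : ℝ, 0 ≤ t → t < T → ∃ x, t ∈ J x := by
      intro t ht0 htT
      obtain ⟨x, h1, h2⟩ := tile_cover keyA hkeyAinj δ hδ t ht0 (by rw [hsum2]; exact htT)
      exact ⟨x, h1, h2⟩
    have hIcover : ∀ t : ℝ, 0 ≤ t → t < T → ∃ i, t ∈ I i := by
      intro t ht0 htT
      obtain ⟨i, h1, h2⟩ := tile_cover keyN hkeyNinj C hC t ht0 htT
      exact ⟨i, h1, h2⟩
    -- the decomposition
    refine ⟨fun i x => (volume (I i ∩ J x)).toReal, fun i x => ENNReal.toReal_nonneg,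
      ?_, ?_, ?_⟩
    · -- column sums
      intro x
      have hfin : ∀ i ∈ (univ : Finset N), volume (I i ∩ J x) ≠ ⊤ := by
        intro i _
        refine ne_top_of_le_ne_top ?_ (measure_mono Set.inter_subset_right)
        rw [hJdef, Real.volume_Ico]
        exact ENNReal.ofReal_ne_top
      rw [← ENNReal.toReal_sum hfin]
      have hU : ⋃ i ∈ (univ : Finset N), (I i ∩ J x) = J x := by
        apply Set.Subset.antisymm
        · exact Set.iUnion₂_subset fun i _ => Set.inter_subset_right
        · intro t ht
          have ht0 : 0 ≤ t := (hs0 x).trans ht.1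
          have htT : t < T := ht.2.trans_le (hsT x)
          obtain ⟨i, hi⟩ := hIcover t ht0 htT
          exact Set.mem_biUnion (mem_univ i) ⟨hi, ht⟩
      rw [← MeasureTheory.measure_biUnion_finset ?_ (fun i _ => ?_), hU]
      · rw [hJdef, Real.volume_Ico, add_sub_cancel_left, ENNReal.toReal_ofReal (hδ x)]
      · intro i _ j _ hij
        exact Set.disjoint_of_subset Set.inter_subset_left Set.inter_subset_left
          (hIdisj hij)
      · exact ((measurableSet_Ico).inter measurableSet_Ico)
    · -- row sums
      intro i
      have hfin : ∀ x ∈ (univ : Finset A), volume (I i ∩ J x) ≠ ⊤ := by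
        intro x _
        refine ne_top_of_le_ne_top ?_ (measure_mono Set.inter_subset_left)
        rw [hIdef, Real.volume_Ico]
        exact ENNReal.ofReal_ne_top
      rw [← ENNReal.toReal_sum hfin]
      have hU : ⋃ x ∈ (univ : Finset A), (I i ∩ J x) = I i := by
        apply Set.Subset.antisymm
        · exact Set.iUnion₂_subset fun x _ => Set.inter_subset_left
        · intro t ht
          have ht0 : 0 ≤ t := (ha0 i).trans ht.1
          have htT : t < T := ht.2.trans_le (haT i)
          obtain ⟨x, hx⟩ := hJcover t ht0 htT
          exact Set.mem_biUnion (mem_univ x) ⟨ht, hx⟩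
      rw [← MeasureTheory.measure_biUnion_finset ?_ (fun x _ => ?_), hU]
      · rw [hIdef, Real.volume_Ico, add_sub_cancel_left, ENNReal.toReal_ofReal (hC i)]
      · intro x _ y _ hxy
        exact Set.disjoint_of_subset Set.inter_subset_right Set.inter_subset_right
          (hJdisj hxy)
      · exact ((measurableSet_Ico).inter measurableSet_Ico)
    · -- support
      intro i x hne
      by_contra hlt
      push_neg at hlt
      rw [← hliw i, hδw x] at hlt
      have hmk : lx x < li i := hmono.lt_iff_lt.1 hlt
      apply hne
      have hsep : s x + δ x ≤ a i := by
        have e1 : s x + δ x ≤ ∑ y ∈ univ.filter (fun y => lx y ≤ lx x), δ y := by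
          rw [← key_le_sum keyA hkeyAinj δ x]
          apply Finset.sum_le_sum_of_subset_of_nonneg _ (fun y _ _ => hδ y)
          intro y hy
          rw [mem_filter] at hy ⊢
          exact ⟨hy.1, hkeyAle hy.2⟩
        have e2 : ∑ y ∈ univ.filter (fun y => lx y ≤ lx x), δ y
            = (∑ y, δ y) - ∑ y ∈ univ.filter (fun y => ¬ lx y ≤ lx x), δ y := by
          rw [← Finset.sum_filter_add_sum_filter_not univ (fun y => lx y ≤ lx x) δ]
          ring
        have e3 : ∑ y ∈ univ.filter (fun y => li i ≤ lx y), δ y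
            ≤ ∑ y ∈ univ.filter (fun y => ¬ lx y ≤ lx x), δ y := by
          apply Finset.sum_le_sum_of_subset_of_nonneg _ (fun y _ _ => hδ y)
          intro y hy
          rw [mem_filter] at hy ⊢
          exact ⟨hy.1, not_le.2 (hmk.trans_le hy.2)⟩
        have e4 : ∑ y ∈ univ.filter (fun y => li i ≤ lx y), δstar y
            ≤ ∑ y ∈ univ.filter (fun y => li i ≤ lx y), δ y := htail (li i)
        have e5 : ∑ j ∈ univ.filter (fun j => li i ≤ li j), C j
            = ∑ y ∈ univ.filter (fun y => li i ≤ lx y), δstar y := hkey (li i)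
        have e6 : T - ∑ j ∈ univ.filter (fun j => li i ≤ li j), C j ≤ a i := by
          have e7 : ∑ j ∈ univ.filter (fun j => li j < li i), C j ≤ a i := by
            apply Finset.sum_le_sum_of_subset_of_nonneg _ (fun j _ _ => hC j)
            intro j hj
            rw [mem_filter] at hj ⊢
            exact ⟨hj.1, hkeyNlt hj.2⟩
          have e8 : ∑ j ∈ univ.filter (fun j => li j < li i), C j
              = T - ∑ j ∈ univ.filter (fun j => li i ≤ li j), C j := by
            rw [hT, ← Finset.sum_filter_add_sum_filter_not univ (fun j => li i ≤ li j) C]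
            have : univ.filter (fun j => ¬ li i ≤ li j) = univ.filter (fun j => li j < li i) := by
              ext j; simp [not_le]
            rw [this]; ring
          rw [← e8]; exact e7
        calc s x + δ x ≤ (∑ y, δ y) - ∑ y ∈ univ.filter (fun y => ¬ lx y ≤ lx x), δ y :=
              e1.trans_eq e2
          _ ≤ (∑ y, δ y) - ∑ y ∈ univ.filter (fun y => li i ≤ lx y), δ y := by linarith
          _ ≤ T - ∑ j ∈ univ.filter (fun j => li i ≤ li j), C j := by
              have := e5 ▸ e4; rw [hsum2]; linarith
          _ ≤ a i := e6
      have : I i ∩ J x = ∅ := Set.disjoint_iff_inter_eq_empty.1 ((ico_disj hsep).symm)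
      show (volume (I i ∩ J x)).toReal = 0
      rw [this]
      simp
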